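/- Let n ≥ 2 and n₁, n₂ be integers with 1 ≤ n₁ ≤ n₂ ≤ n−1. For k ∈ ℕ let Q_k be the set of all products ∏_{1≤i≤n₁, n₁+1≤s≤n} (x_i·x_s)^{p_{is}} · ∏_{1≤j≤n₂, n₂+1≤t≤n} (y_j·y_t)^{q_{jt}} over tuples of natural numbers with ∑ p_{is} + ∑ q_{jt} = k. Then there exist real constants c₁, c₂ > 0 and K ∈ ℕ such that c₁·k^{2n−3} ≤ dim span Q_k ≤ c₂·k^{2n−3} for all k ≥ K. -/

import Mathlib

set_option linter.unusedSectionVars false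


open MvPolynomial

/-- The set Q_k of products ∏ (x_i x_s)^{p_{is}} · ∏ (y_j y_t)^{q_{jt}} over tuples with
∑ p + ∑ q = k, where (0-based) i.val < n₁ means 1 ≤ i ≤ n₁, n₁ ≤ s.val means n₁+1 ≤ s ≤ n,
j.val < n₂ means 1 ≤ j ≤ n₂, and n₂ ≤ t.val means n₂+1 ≤ t ≤ n.
x-variables are `Sum.inl`, y-variables `Sum.inr`. -/
def Qset (n n₁ n₂ k : ℕ) : Set (MvPolynomial (Fin n ⊕ Fin n) ℝ) :=
  {f | ∃ p q : Fin n → Fin n → ℕ,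
    ((∑ i ∈ Finset.univ.filter (fun i : Fin n => i.val < n₁),
        ∑ s ∈ Finset.univ.filter (fun s : Fin n => n₁ ≤ s.val), p i s) +
      (∑ j ∈ Finset.univ.filter (fun j : Fin n => j.val < n₂),
        ∑ t ∈ Finset.univ.filter (fun t : Fin n => n₂ ≤ t.val), q j t)) = k ∧
    f = (∏ i ∈ Finset.univ.filter (fun i : Fin n => i.val < n₁),
          ∏ s ∈ Finset.univ.filter (fun s : Fin n => n₁ ≤ s.val),
            (X (Sum.inl i) * X (Sum.inl s)) ^ p i s) *
        (∏ j ∈ Finset.univ.filter (fun j : Fin n => j.val < n₂),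
          ∏ t ∈ Finset.univ.filter (fun t : Fin n => n₂ ≤ t.val),
            (X (Sum.inr j) * X (Sum.inr t)) ^ q j t)}

noncomputable section Stmt7Aux

private lemma prod_monomial_one {n : ℕ} {α : Type*} (s : Finset α)
    (f : α → ((Fin n ⊕ Fin n) →₀ ℕ)) :
    ∏ i ∈ s, (monomial (f i) (1:ℝ)) = monomial (∑ i ∈ s, f i) 1 := by
  classical
  induction s using Finset.induction_on with
  | empty => simp [monomial_eq]
  | insert a s h ih => simp [Finset.prod_insert h, Finset.sum_insert h, ih, monomial_mul]

def expOf (n n₁ n₂ : ℕ) (p q : Fin n → Fin n → ℕ) : (Fin n ⊕ Fin n) →₀ ℕ :=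
  (∑ i ∈ Finset.univ.filter (fun i : Fin n => i.val < n₁),
     ∑ s ∈ Finset.univ.filter (fun s : Fin n => n₁ ≤ s.val),
       p i s • (Finsupp.single (Sum.inl i) 1 + Finsupp.single (Sum.inl s) 1)) +
  (∑ j ∈ Finset.univ.filter (fun j : Fin n => j.val < n₂),
     ∑ t ∈ Finset.univ.filter (fun t : Fin n => n₂ ≤ t.val),
       q j t • (Finsupp.single (Sum.inr j) 1 + Finsupp.single (Sum.inr t) 1))

variable {n n₁ n₂ : ℕ}

lemma prod_eq_monomial (p q : Fin n → Fin n → ℕ) :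
    ((∏ i ∈ Finset.univ.filter (fun i : Fin n => i.val < n₁),
          ∏ s ∈ Finset.univ.filter (fun s : Fin n => n₁ ≤ s.val),
            (X (Sum.inl i) * X (Sum.inl s)) ^ p i s) *
        (∏ j ∈ Finset.univ.filter (fun j : Fin n => j.val < n₂),
          ∏ t ∈ Finset.univ.filter (fun t : Fin n => n₂ ≤ t.val),
            (X (Sum.inr j) * X (Sum.inr t)) ^ q j t) : MvPolynomial (Fin n ⊕ Fin n) ℝ) =
      monomial (expOf n n₁ n₂ p q) 1 := by
  have key : ∀ (a b : Fin n ⊕ Fin n) (e : ℕ),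
      ((X a * X b) ^ e : MvPolynomial (Fin n ⊕ Fin n) ℝ) =
        monomial (e • (Finsupp.single a 1 + Finsupp.single b 1)) 1 := by
    intro a b e
    rw [X, X, monomial_mul, monomial_pow]
    simp
  simp only [key, prod_monomial_one, monomial_mul, mul_one]
  rfl

lemma expOf_apply_inl (p q : Fin n → Fin n → ℕ) (v : Fin n) :
    expOf n n₁ n₂ p q (Sum.inl v) =
      (if v.val < n₁ then ∑ s ∈ Finset.univ.filter (fun s : Fin n => n₁ ≤ s.val), p v s else 0) +
      (if n₁ ≤ v.val then ∑ i ∈ Finset.univ.filter (fun i : Fin n => i.val < n₁), p i v else 0) := by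
  classical
  simp only [expOf, Finsupp.add_apply, Finsupp.finset_sum_apply, Finsupp.smul_apply,
    Finsupp.add_apply, Finsupp.single_apply, Sum.inl.injEq, smul_eq_mul, reduceCtorEq,
    if_false, add_zero, mul_zero, Finset.sum_const_zero]
  simp only [mul_add, Finset.sum_add_distrib]
  congr 1
  · rw [Finset.sum_congr rfl (fun x _ => show _ = if x = v then ∑ s ∈ Finset.univ.filter
        (fun s : Fin n => n₁ ≤ s.val), p x s else 0 by split <;> simp [*]),
      Finset.sum_ite_eq' (Finset.univ.filter (fun i : Fin n => i.val < n₁)) v]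
    simp
  · rw [Finset.sum_congr rfl (fun x _ => show _ = if n₁ ≤ v.val then p x v else 0 by
      simp only [mul_ite, mul_one, mul_zero,
        Finset.sum_ite_eq' (Finset.univ.filter (fun s : Fin n => n₁ ≤ s.val)) v]
      simp)]
    split <;> simp

lemma expOf_apply_inr (p q : Fin n → Fin n → ℕ) (v : Fin n) :
    expOf n n₁ n₂ p q (Sum.inr v) =
      (if v.val < n₂ then ∑ t ∈ Finset.univ.filter (fun t : Fin n => n₂ ≤ t.val), q v t else 0) +
      (if n₂ ≤ v.val then ∑ j ∈ Finset.univ.filter (fun j : Fin n => j.val < n₂), q j v else 0) := by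
  classical
  simp only [expOf, Finsupp.add_apply, Finsupp.finset_sum_apply, Finsupp.smul_apply,
    Finsupp.add_apply, Finsupp.single_apply, Sum.inr.injEq, smul_eq_mul, reduceCtorEq,
    if_false, add_zero, zero_add, mul_zero, Finset.sum_const_zero]
  simp only [mul_add, Finset.sum_add_distrib]
  congr 1
  · rw [Finset.sum_congr rfl (fun x _ => show _ = if x = v then ∑ t ∈ Finset.univ.filter
        (fun t : Fin n => n₂ ≤ t.val), q x t else 0 by split <;> simp [*]),
      Finset.sum_ite_eq' (Finset.univ.filter (fun j : Fin n => j.val < n₂)) v]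
    simp
  · rw [Finset.sum_congr rfl (fun x _ => show _ = if n₂ ≤ v.val then q x v else 0 by
      simp only [mul_ite, mul_one, mul_zero,
        Finset.sum_ite_eq' (Finset.univ.filter (fun t : Fin n => n₂ ≤ t.val)) v]
      simp)]
    split <;> simp

def Eset (n n₁ n₂ k : ℕ) : Set ((Fin n ⊕ Fin n) →₀ ℕ) :=
  {d | ∃ p q : Fin n → Fin n → ℕ,
    ((∑ i ∈ Finset.univ.filter (fun i : Fin n => i.val < n₁),
        ∑ s ∈ Finset.univ.filter (fun s : Fin n => n₁ ≤ s.val), p i s) +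
      (∑ j ∈ Finset.univ.filter (fun j : Fin n => j.val < n₂),
        ∑ t ∈ Finset.univ.filter (fun t : Fin n => n₂ ≤ t.val), q j t)) = k ∧
    d = expOf n n₁ n₂ p q}

section Sums

variable (p q : Fin n → Fin n → ℕ)

lemma sum_inl_left :
    ∑ v ∈ Finset.univ.filter (fun v : Fin n => v.val < n₁), expOf n n₁ n₂ p q (Sum.inl v) =
      ∑ i ∈ Finset.univ.filter (fun i : Fin n => i.val < n₁),
        ∑ s ∈ Finset.univ.filter (fun s : Fin n => n₁ ≤ s.val), p i s := by
  refine Finset.sum_congr rfl fun v hv => ?_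
  rw [expOf_apply_inl]
  have h := (Finset.mem_filter.mp hv).2
  rw [if_pos h, if_neg (by omega), add_zero]

lemma sum_inl_right :
    ∑ v ∈ Finset.univ.filter (fun v : Fin n => n₁ ≤ v.val), expOf n n₁ n₂ p q (Sum.inl v) =
      ∑ i ∈ Finset.univ.filter (fun i : Fin n => i.val < n₁),
        ∑ s ∈ Finset.univ.filter (fun s : Fin n => n₁ ≤ s.val), p i s := by
  rw [Finset.sum_comm]
  refine Finset.sum_congr rfl fun v hv => ?_
  rw [expOf_apply_inl]
  have h := (Finset.mem_filter.mp hv).2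
  rw [if_pos h, if_neg (by omega), zero_add]

lemma sum_inr_left :
    ∑ v ∈ Finset.univ.filter (fun v : Fin n => v.val < n₂), expOf n n₁ n₂ p q (Sum.inr v) =
      ∑ j ∈ Finset.univ.filter (fun j : Fin n => j.val < n₂),
        ∑ t ∈ Finset.univ.filter (fun t : Fin n => n₂ ≤ t.val), q j t := by
  refine Finset.sum_congr rfl fun v hv => ?_
  rw [expOf_apply_inr]
  have h := (Finset.mem_filter.mp hv).2
  rw [if_pos h, if_neg (by omega), add_zero]

lemma sum_inr_right :
    ∑ v ∈ Finset.univ.filter (fun v : Fin n => n₂ ≤ v.val), expOf n n₁ n₂ p q (Sum.inr v) =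
      ∑ j ∈ Finset.univ.filter (fun j : Fin n => j.val < n₂),
        ∑ t ∈ Finset.univ.filter (fun t : Fin n => n₂ ≤ t.val), q j t := by
  rw [Finset.sum_comm]
  refine Finset.sum_congr rfl fun v hv => ?_
  rw [expOf_apply_inr]
  have h := (Finset.mem_filter.mp hv).2
  rw [if_pos h, if_neg (by omega), zero_add]

end Sums

lemma Eset_spec {k : ℕ} {d : (Fin n ⊕ Fin n) →₀ ℕ} (hd : d ∈ Eset n n₁ n₂ k) :
    ∃ P Q : ℕ, P + Q = k ∧
      (∑ v ∈ Finset.univ.filter (fun v : Fin n => v.val < n₁), d (Sum.inl v) = P) ∧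
      (∑ v ∈ Finset.univ.filter (fun v : Fin n => n₁ ≤ v.val), d (Sum.inl v) = P) ∧
      (∑ v ∈ Finset.univ.filter (fun v : Fin n => v.val < n₂), d (Sum.inr v) = Q) ∧
      (∑ v ∈ Finset.univ.filter (fun v : Fin n => n₂ ≤ v.val), d (Sum.inr v) = Q) := by
  obtain ⟨p, q, hk, rfl⟩ := hd
  exact ⟨_, _, hk, sum_inl_left p q, sum_inl_right p q, sum_inr_left p q, sum_inr_right p q⟩

lemma Eset_coord_le {k : ℕ} {d : (Fin n ⊕ Fin n) →₀ ℕ} (hd : d ∈ Eset n n₁ n₂ k)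
    (v : Fin n ⊕ Fin n) : d v ≤ k := by
  obtain ⟨P, Q, hPQ, h1, h2, h3, h4⟩ := Eset_spec hd
  have hsingle : ∀ (s : Finset (Fin n)) (f : Fin n → ℕ) (w : Fin n), w ∈ s →
      f w ≤ ∑ x ∈ s, f x := fun s f w hw => Finset.single_le_sum (fun _ _ => Nat.zero_le _) hw
  rcases v with v | v
  · rcases lt_or_ge v.val n₁ with h | h
    · have := hsingle (Finset.univ.filter (fun x : Fin n => x.val < n₁)) (fun x => d (Sum.inl x)) v
        (by simp only [Finset.mem_filter, Finset.mem_univ, true_and]; exact h); omega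
    · have := hsingle (Finset.univ.filter (fun x : Fin n => n₁ ≤ x.val)) (fun x => d (Sum.inl x)) v
        (by simp only [Finset.mem_filter, Finset.mem_univ, true_and]; exact h); omega
  · rcases lt_or_ge v.val n₂ with h | h
    · have := hsingle (Finset.univ.filter (fun x : Fin n => x.val < n₂)) (fun x => d (Sum.inr x)) v
        (by simp only [Finset.mem_filter, Finset.mem_univ, true_and]; exact h); omega
    · have := hsingle (Finset.univ.filter (fun x : Fin n => n₂ ≤ x.val)) (fun x => d (Sum.inr x)) v
        (by simp only [Finset.mem_filter, Finset.mem_univ, true_and]; exact h); omega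

lemma Eset_finite (k : ℕ) : (Eset n n₁ n₂ k).Finite := by
  rw [Set.finite_coe_iff.symm]
  refine Finite.of_injective (fun d => (fun v => (⟨d.1 v, Nat.lt_succ_of_le
    (Eset_coord_le d.2 v)⟩ : Fin (k+1)) : (Fin n ⊕ Fin n) → Fin (k+1))) ?_
  intro d d' h
  ext v
  exact congrArg Fin.val (congrFun h v)

lemma Qset_eq (k : ℕ) :
    Qset n n₁ n₂ k = (fun d => (monomial d (1:ℝ) : MvPolynomial (Fin n ⊕ Fin n) ℝ)) ''
      Eset n n₁ n₂ k := by
  ext f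
  constructor
  · rintro ⟨p, q, hk, rfl⟩
    exact ⟨expOf n n₁ n₂ p q, ⟨p, q, hk, rfl⟩, (prod_eq_monomial p q).symm⟩
  · rintro ⟨d, ⟨p, q, hk, rfl⟩, rfl⟩
    exact ⟨p, q, hk, (prod_eq_monomial p q).symm⟩

lemma finrank_eq (k : ℕ) :
    Module.finrank ℝ (Submodule.span ℝ (Qset n n₁ n₂ k)) = Nat.card (Eset n n₁ n₂ k) := by
  classical
  have hb : ⇑(basisMonomials (Fin n ⊕ Fin n) ℝ) = fun d => (monomial d (1:ℝ)) :=
    coe_basisMonomials _ _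
  have him : Qset n n₁ n₂ k = ⇑(basisMonomials (Fin n ⊕ Fin n) ℝ) '' Eset n n₁ n₂ k := by
    rw [hb]; exact Qset_eq k
  have hbinj : Function.Injective ⇑(basisMonomials (Fin n ⊕ Fin n) ℝ) :=
    (basisMonomials (Fin n ⊕ Fin n) ℝ).injective
  have hfin : (⇑(basisMonomials (Fin n ⊕ Fin n) ℝ) '' Eset n n₁ n₂ k).Finite :=
    (Eset_finite k).image _
  haveI : Fintype ↥(⇑(basisMonomials (Fin n ⊕ Fin n) ℝ) '' Eset n n₁ n₂ k) := hfin.fintype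
  have li : LinearIndependent ℝ
      ((↑) : ↥(⇑(basisMonomials (Fin n ⊕ Fin n) ℝ) '' Eset n n₁ n₂ k) →
        MvPolynomial (Fin n ⊕ Fin n) ℝ) :=
    ((basisMonomials (Fin n ⊕ Fin n) ℝ).linearIndependent.linearIndepOn_id).mono
      (Set.image_subset_range _ _)
  rw [him, finrank_span_set_eq_card li, Set.toFinset_card, ← Nat.card_eq_fintype_card,
    Nat.card_coe_set_eq, Set.ncard_image_of_injective _ hbinj, Nat.card_coe_set_eq]

/-- cardinality of an interval subtype of `Fin n` -/
lemma cardIco (a b : ℕ) (hb : b ≤ n) :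
    Fintype.card {i : Fin n // a ≤ i.val ∧ i.val < b} = b - a := by
  rcases le_or_gt a b with hab | hab
  · refine (Fintype.card_congr ⟨fun x => (⟨x.1.1 - a, by omega⟩ : Fin (b-a)),
      fun y => ⟨⟨y.1 + a, by omega⟩, by simp; omega⟩, fun x => ?_, fun y => ?_⟩).trans
        (Fintype.card_fin _)
    · ext; simp; omega
    · ext; simp
  · rw [Nat.sub_eq_zero_of_le hab.le, Fintype.card_eq_zero_iff]
    exact ⟨fun x => absurd x.2 (by omega)⟩

lemma cardLt (b : ℕ) (hb : b ≤ n) : Fintype.card {i : Fin n // i.val < b} = b := by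
  rw [Fintype.card_congr (Equiv.subtypeEquivRight (q := fun i : Fin n => 0 ≤ i.val ∧ i.val < b)
    (by intro x; omega)), cardIco 0 b hb]
  omega

lemma card_upper (hn : 2 ≤ n) (h1 : 1 ≤ n₁) (h2 : n₁ ≤ n₂) (h3 : n₂ ≤ n - 1) (k : ℕ) :
    Nat.card (Eset n n₁ n₂ k) ≤ (k + 1) ^ (2 * n - 3) := by
  classical
  have hn1 : n₁ < n := by omega
  have hn2 : n₂ < n := by omega
  have hnn : 0 < n := by omega
  set S : Finset (Fin n ⊕ Fin n) :=
    {Sum.inl ⟨n₁-1, by omega⟩, Sum.inl ⟨n-1, by omega⟩,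
     Sum.inr ⟨n₂-1, by omega⟩, Sum.inr ⟨n-1, by omega⟩} with hS
  have hScard : S.card = 4 := by
    rw [hS]
    rw [Finset.card_insert_of_notMem (by simp [Fin.ext_iff]; omega),
      Finset.card_insert_of_notMem (by simp [Fin.ext_iff]),
      Finset.card_insert_of_notMem (by simp [Fin.ext_iff]; omega),
      Finset.card_singleton]
  -- the injection
  have key : ∀ d d' : (Fin n ⊕ Fin n) →₀ ℕ, d ∈ Eset n n₁ n₂ k → d' ∈ Eset n n₁ n₂ k →
      (∑ v ∈ Finset.univ.filter (fun v : Fin n => v.val < n₁), d (Sum.inl v) =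
       ∑ v ∈ Finset.univ.filter (fun v : Fin n => v.val < n₁), d' (Sum.inl v)) →
      (∀ w ∉ S, d w = d' w) → d = d' := by
    intro d d' hd hd' ha hco
    obtain ⟨P, Q, hPQ, e1, e2, e3, e4⟩ := Eset_spec hd
    obtain ⟨P', Q', hPQ', e1', e2', e3', e4'⟩ := Eset_spec hd'
    have hPP : P = P' := by rw [← e1, ← e1', ha]
    have hQQ : Q = Q' := by omega
    have sum_split : ∀ (c : ℕ) (f f' : Fin n → ℕ) (pred : Fin n → Prop)
        (_ : DecidablePred pred) (w : Fin n), pred w →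
        (∑ v ∈ Finset.univ.filter (fun v => pred v), f v =
          ∑ v ∈ Finset.univ.filter (fun v => pred v), f' v) →
        (∀ v, pred v → v ≠ w → f v = f' v) → f w = f' w := by
      intro c f f' pred inst w hw hsum hrest
      have hmem : w ∈ Finset.univ.filter (fun v => pred v) := by
        simp only [Finset.mem_filter, Finset.mem_univ, true_and]; exact hw
      rw [← Finset.add_sum_erase _ f hmem, ← Finset.add_sum_erase _ f' hmem] at hsum
      have : ∑ v ∈ (Finset.univ.filter (fun v => pred v)).erase w, f v =
          ∑ v ∈ (Finset.univ.filter (fun v => pred v)).erase w, f' v := by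
        refine Finset.sum_congr rfl fun v hv => ?_
        have h1 := Finset.mem_of_mem_erase hv
        have h2 := Finset.ne_of_mem_erase hv
        simp only [Finset.mem_filter, Finset.mem_univ, true_and] at h1
        exact hrest v h1 h2
      omega
    ext w
    have hmemS : ∀ w : Fin n ⊕ Fin n, w ∈ S ↔
        (w = Sum.inl ⟨n₁-1, by omega⟩ ∨ w = Sum.inl ⟨n-1, by omega⟩ ∨
         w = Sum.inr ⟨n₂-1, by omega⟩ ∨ w = Sum.inr ⟨n-1, by omega⟩) := by
      intro w; simp [hS]
    rcases w with v | v
    · rcases lt_or_ge v.val n₁ with hv | hv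
      · rcases eq_or_ne v.val (n₁ - 1) with hve | hve
        · refine sum_split 0 (fun x => d (Sum.inl x)) (fun x => d' (Sum.inl x))
            (fun x => x.val < n₁) (by infer_instance) v hv (by rw [e1, hPP, e1']) ?_
          intro u hu hne
          refine hco _ ?_
          rw [hmemS]
          push_neg
          refine ⟨?_, ?_, by simp, by simp⟩ <;> simp [Fin.ext_iff] <;> omega
        · refine hco _ ?_
          rw [hmemS]; push_neg
          refine ⟨?_, ?_, by simp, by simp⟩ <;> simp [Fin.ext_iff] <;> omega
      · rcases eq_or_ne v.val (n - 1) with hve | hve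
        · refine sum_split 0 (fun x => d (Sum.inl x)) (fun x => d' (Sum.inl x))
            (fun x => n₁ ≤ x.val) (by infer_instance) v hv (by rw [e2, hPP, e2']) ?_
          intro u hu hne
          refine hco _ ?_
          rw [hmemS]; push_neg
          refine ⟨?_, ?_, by simp, by simp⟩ <;> simp [Fin.ext_iff] <;> omega
        · refine hco _ ?_
          rw [hmemS]; push_neg
          refine ⟨?_, ?_, by simp, by simp⟩ <;> simp [Fin.ext_iff] <;> omega
    · rcases lt_or_ge v.val n₂ with hv | hv
      · rcases eq_or_ne v.val (n₂ - 1) with hve | hve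
        · refine sum_split 0 (fun x => d (Sum.inr x)) (fun x => d' (Sum.inr x))
            (fun x => x.val < n₂) (by infer_instance) v hv (by rw [e3, hQQ, e3']) ?_
          intro u hu hne
          refine hco _ ?_
          rw [hmemS]; push_neg
          refine ⟨by simp, by simp, ?_, ?_⟩ <;> simp [Fin.ext_iff] <;> omega
        · refine hco _ ?_
          rw [hmemS]; push_neg
          refine ⟨by simp, by simp, ?_, ?_⟩ <;> simp [Fin.ext_iff] <;> omega
      · rcases eq_or_ne v.val (n - 1) with hve | hve
        · refine sum_split 0 (fun x => d (Sum.inr x)) (fun x => d' (Sum.inr x))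
            (fun x => n₂ ≤ x.val) (by infer_instance) v hv (by rw [e4, hQQ, e4']) ?_
          intro u hu hne
          refine hco _ ?_
          rw [hmemS]; push_neg
          refine ⟨by simp, by simp, ?_, ?_⟩ <;> simp [Fin.ext_iff] <;> omega
        · refine hco _ ?_
          rw [hmemS]; push_neg
          refine ⟨by simp, by simp, ?_, ?_⟩ <;> simp [Fin.ext_iff] <;> omega
  -- assemble the injection
  have hF : Function.Injective (fun d : Eset n n₁ n₂ k =>
      ((⟨∑ v ∈ Finset.univ.filter (fun v : Fin n => v.val < n₁), d.1 (Sum.inl v),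
        by
          obtain ⟨P, Q, hPQ, e1, _, _, _⟩ := Eset_spec d.2
          rw [e1]; omega⟩,
        fun w : {v : Fin n ⊕ Fin n // v ∉ S} =>
          ⟨d.1 w.1, Nat.lt_succ_of_le (Eset_coord_le d.2 w.1)⟩) :
        Fin (k+1) × ({v : Fin n ⊕ Fin n // v ∉ S} → Fin (k+1)))) := by
    intro d d' h
    simp only [Prod.mk.injEq, Fin.mk.injEq] at h
    refine Subtype.ext (key d.1 d'.1 d.2 d'.2 h.1 fun w hw => ?_)
    exact congrArg Fin.val (congrFun h.2 ⟨w, hw⟩)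
  have hcard := Nat.card_le_card_of_injective _ hF
  refine hcard.trans ?_
  rw [Nat.card_eq_fintype_card, Fintype.card_prod, Fintype.card_fun, Fintype.card_fin,
    Fintype.card_subtype_compl, Fintype.card_sum, Fintype.card_fin]
  have : Fintype.card {v : Fin n ⊕ Fin n // v ∈ S} = 4 := by
    simpa using (Fintype.card_coe S).trans hScard
  rw [this]
  have h34 : 2 * n - 3 = (n + n - 4) + 1 := by omega
  rw [h34, pow_succ]
  ring_nf
  exact le_refl _


section Lower

def ext₁ {n m : ℕ} (p : Fin n → Prop) [DecidablePred p] (g : {i : Fin n // p i} → Fin m) :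
    Fin n → ℕ := fun i => if h : p i then (g ⟨i, h⟩ : ℕ) else 0

lemma sum_ext₁ {n m : ℕ} (p : Fin n → Prop) [DecidablePred p] (g : {i : Fin n // p i} → Fin m)
    (t : Finset (Fin n)) (hsub : ∀ x, p x → x ∈ t) :
    ∑ s ∈ t, ext₁ p g s = ∑ x : {i : Fin n // p i}, (g x : ℕ) := by
  classical
  simp only [ext₁]
  rw [← Finset.sum_subset (show Finset.univ.filter p ⊆ t from fun x hx =>
      hsub x (Finset.mem_filter.mp hx).2)
    (fun x _ hx => dif_neg (fun hp => hx (Finset.mem_filter.mpr ⟨Finset.mem_univ x, hp⟩)))]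
  rw [Finset.sum_subtype (p := p) (Finset.univ.filter p)
    (fun x => Finset.mem_filter.trans (and_iff_right (Finset.mem_univ x)))
    (fun i => if h : p i then (g ⟨i, h⟩ : ℕ) else 0)]
  exact Finset.sum_congr rfl fun x _ => by rw [dif_pos x.2]

lemma sum_delta {n : ℕ} (t : Finset (Fin n)) (c : ℕ) (hc : c < n)
    (hw : (⟨c, hc⟩ : Fin n) ∈ t) (A : ℕ) :
    ∑ s ∈ t, (if s.val = c then A else 0) = A := by
  classical
  rw [Finset.sum_congr rfl (fun s _ => show (if s.val = c then A else 0) =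
      (if s = ⟨c, hc⟩ then A else 0) by simp [Fin.ext_iff]),
    Finset.sum_ite_eq' t (⟨c, hc⟩ : Fin n) (fun _ => A), if_pos hw]

variable {n n₁ n₂ m : ℕ}
  (g : {i : Fin n // i.val < n₁} → Fin m)
  (f : {s : Fin n // n₁ ≤ s.val ∧ s.val < n - 1} → Fin m)
  (g' : {j : Fin n // 1 ≤ j.val ∧ j.val < n₂} → Fin m)
  (f' : {t : Fin n // n₂ ≤ t.val ∧ t.val < n - 1} → Fin m)
  (R : ℕ)

def pmat (n₁ : ℕ) (g : {i : Fin n // i.val < n₁} → Fin m)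
    (f : {s : Fin n // n₁ ≤ s.val ∧ s.val < n - 1} → Fin m) : Fin n → Fin n → ℕ := fun i s =>
  if i.val < n₁ ∧ n₁ ≤ s.val then
    ((if s.val = n - 1 then ext₁ _ g i else 0) + (if i.val = 0 then ext₁ _ f s else 0))
  else 0

def qmat (n₂ : ℕ) (g' : {j : Fin n // 1 ≤ j.val ∧ j.val < n₂} → Fin m)
    (f' : {t : Fin n // n₂ ≤ t.val ∧ t.val < n - 1} → Fin m) (R : ℕ) :
    Fin n → Fin n → ℕ := fun j t =>
  if j.val < n₂ ∧ n₂ ≤ t.val then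
    ((if t.val = n - 1 then (if j.val = 0 then R else ext₁ _ g' j) else 0) +
      (if j.val = 0 then ext₁ _ f' t else 0))
  else 0

variable (hn : 2 ≤ n) (h1 : 1 ≤ n₁) (h2 : n₁ ≤ n₂) (h3 : n₂ ≤ n - 1)
include hn h1 h2 h3

lemma row_p (v : Fin n) (hv : v.val < n₁) :
    ∑ s ∈ Finset.univ.filter (fun s : Fin n => n₁ ≤ s.val), pmat n₁ g f v s =
      ext₁ _ g v + (if v.val = 0 then ∑ x, (f x : ℕ) else 0) := by
  rw [Finset.sum_congr rfl (fun s hs => show pmat n₁ g f v s = _ from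
    if_pos ⟨hv, (Finset.mem_filter.mp hs).2⟩), Finset.sum_add_distrib]
  congr 1
  · exact sum_delta _ (n - 1) (by omega) (by simp; omega) _
  · by_cases hv0 : v.val = 0
    · rw [Finset.sum_congr rfl (fun x _ => if_pos hv0), if_pos hv0]
      exact sum_ext₁ _ f _ (fun x hx => by simp; omega)
    · simp [hv0]

lemma col_p (v : Fin n) (hv₁ : n₁ ≤ v.val) (hv₂ : v.val < n - 1) :
    ∑ i ∈ Finset.univ.filter (fun i : Fin n => i.val < n₁), pmat n₁ g f i v =
      ext₁ _ f v := by
  rw [Finset.sum_congr rfl (fun i hi => show pmat n₁ g f i v = (if i.val = 0 then ext₁ _ f v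
      else 0) by
    rw [pmat, if_pos ⟨(Finset.mem_filter.mp hi).2, hv₁⟩, if_neg (by omega), zero_add])]
  exact sum_delta _ 0 (by omega) (by simp; omega) _

lemma row_q (v : Fin n) (hv : v.val < n₂) :
    ∑ t ∈ Finset.univ.filter (fun t : Fin n => n₂ ≤ t.val), qmat n₂ g' f' R v t =
      (if v.val = 0 then R + ∑ x, (f' x : ℕ) else 0) + ext₁ _ g' v := by
  rw [Finset.sum_congr rfl (fun t ht => show qmat n₂ g' f' R v t = _ from
    if_pos ⟨hv, (Finset.mem_filter.mp ht).2⟩), Finset.sum_add_distrib]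
  rw [sum_delta _ (n - 1) (by omega) (by simp; omega) _]
  by_cases hv0 : v.val = 0
  · rw [Finset.sum_congr rfl (fun x _ => if_pos hv0), if_pos hv0, if_pos hv0,
      sum_ext₁ _ f' _ (fun x hx => by simp; omega), ext₁, dif_neg (by omega)]
    omega
  · rw [Finset.sum_congr rfl (fun x _ => if_neg hv0), if_neg hv0, if_neg hv0]
    simp

lemma col_q (v : Fin n) (hv₁ : n₂ ≤ v.val) (hv₂ : v.val < n - 1) :
    ∑ j ∈ Finset.univ.filter (fun j : Fin n => j.val < n₂), qmat n₂ g' f' R j v =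
      ext₁ _ f' v := by
  rw [Finset.sum_congr rfl (fun j hj => show qmat n₂ g' f' R j v = (if j.val = 0 then
      ext₁ _ f' v else 0) by
    rw [qmat, if_pos ⟨(Finset.mem_filter.mp hj).2, hv₁⟩, if_neg (by omega), zero_add])]
  exact sum_delta _ 0 (by omega) (by simp; omega) _

lemma total_p :
    ∑ i ∈ Finset.univ.filter (fun i : Fin n => i.val < n₁),
      ∑ s ∈ Finset.univ.filter (fun s : Fin n => n₁ ≤ s.val), pmat n₁ g f i s =
      (∑ x, (g x : ℕ)) + ∑ x, (f x : ℕ) := by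
  rw [Finset.sum_congr rfl (fun i hi => row_p g f hn h1 h2 h3 i (Finset.mem_filter.mp hi).2),
    Finset.sum_add_distrib, sum_ext₁ _ g _ (fun x hx => by simp [hx]),
    sum_delta _ 0 (by omega) (by simp; omega) _]

lemma total_q :
    ∑ j ∈ Finset.univ.filter (fun j : Fin n => j.val < n₂),
      ∑ t ∈ Finset.univ.filter (fun t : Fin n => n₂ ≤ t.val), qmat n₂ g' f' R j t =
      R + (∑ x, (g' x : ℕ)) + ∑ x, (f' x : ℕ) := by
  rw [Finset.sum_congr rfl (fun j hj => row_q g' f' R hn h1 h2 h3 j (Finset.mem_filter.mp hj).2),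
    Finset.sum_add_distrib, sum_ext₁ _ g' _ (fun x hx => by simp; omega),
    sum_delta _ 0 (by omega) (by simp; omega) _]
  omega

end Lower

lemma card_lower (hn : 2 ≤ n) (h1 : 1 ≤ n₁) (h2 : n₁ ≤ n₂) (h3 : n₂ ≤ n - 1) (k m : ℕ)
    (hm : 2 * n * m ≤ k) :
    m ^ (2 * n - 3) ≤ Nat.card (Eset n n₁ n₂ k) := by
  classical
  haveI : Finite (Eset n n₁ n₂ k) := (Eset_finite k).to_subtype
  have hbound : ∀ (g : {i : Fin n // i.val < n₁} → Fin m) (f : {s : Fin n // n₁ ≤ s.val ∧ s.val < n - 1} → Fin m) (g' : {j : Fin n // 1 ≤ j.val ∧ j.val < n₂} → Fin m) (f' : {t : Fin n // n₂ ≤ t.val ∧ t.val < n - 1} → Fin m),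
      (∑ x, (g x : ℕ)) + (∑ x, (f x : ℕ)) + (∑ x, (g' x : ℕ)) + (∑ x, (f' x : ℕ)) ≤ k := by
    intro g f g' f'
    have hm1 : 1 ≤ m := by
      rcases Nat.eq_zero_or_pos m with hm0 | hm0
      · exact absurd (g ⟨⟨0, by omega⟩, by simp only [Fin.val_mk]; omega⟩).pos (by omega)
      · exact hm0
    have bnd : ∀ {T : Type} [Fintype T] (h : T → Fin m),
        ∑ x, (h x : ℕ) ≤ Fintype.card T * (m - 1) := by
      intro T _ h
      calc ∑ x, (h x : ℕ) ≤ Finset.univ.card • (m - 1) :=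
            Finset.sum_le_card_nsmul _ _ _ (fun x _ => by have := (h x).2; omega)
        _ = Fintype.card T * (m - 1) := by rw [smul_eq_mul, Finset.card_univ]
    have cA : Fintype.card {i : Fin n // i.val < n₁} = n₁ := cardLt n₁ (by omega)
    have cB : Fintype.card {s : Fin n // n₁ ≤ s.val ∧ s.val < n - 1} = (n - 1) - n₁ := cardIco n₁ (n - 1) (by omega)
    have cC : Fintype.card {j : Fin n // 1 ≤ j.val ∧ j.val < n₂} = n₂ - 1 := cardIco 1 n₂ (by omega)
    have cD : Fintype.card {t : Fin n // n₂ ≤ t.val ∧ t.val < n - 1} = (n - 1) - n₂ := cardIco n₂ (n - 1) (by omega)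
    have step := Nat.add_le_add (Nat.add_le_add (Nat.add_le_add
      (cA ▸ bnd g) (cB ▸ bnd f)) (cC ▸ bnd g')) (cD ▸ bnd f')
    have heq : n₁ * (m-1) + ((n-1) - n₁) * (m-1) + (n₂ - 1) * (m-1) + ((n-1) - n₂) * (m-1)
        = (n₁ + ((n-1) - n₁) + (n₂ - 1) + ((n-1) - n₂)) * (m-1) := by
      rw [add_mul, add_mul, add_mul]
    have hfin : (n₁ + ((n-1) - n₁) + (n₂ - 1) + ((n-1) - n₂)) * (m-1) ≤ 2 * n * m :=
      Nat.mul_le_mul (by omega) (by omega)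
    omega
  -- the injection
  set Φ : ({i : Fin n // i.val < n₁} → Fin m) × ({s : Fin n // n₁ ≤ s.val ∧ s.val < n - 1} → Fin m) × ({j : Fin n // 1 ≤ j.val ∧ j.val < n₂} → Fin m) × ({t : Fin n // n₂ ≤ t.val ∧ t.val < n - 1} → Fin m) → Eset n n₁ n₂ k :=
    fun θ => ⟨expOf n n₁ n₂ (pmat n₁ θ.1 θ.2.1)
        (qmat n₂ θ.2.2.1 θ.2.2.2
          (k - ((∑ x, (θ.1 x : ℕ)) + (∑ x, (θ.2.1 x : ℕ)) + (∑ x, (θ.2.2.1 x : ℕ)) +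
            (∑ x, (θ.2.2.2 x : ℕ))))),
      ⟨_, _, by
        rw [total_p θ.1 θ.2.1 hn h1 h2 h3, total_q θ.2.2.1 θ.2.2.2 _ hn h1 h2 h3]
        have := hbound θ.1 θ.2.1 θ.2.2.1 θ.2.2.2
        omega, rfl⟩⟩ with hΦ
  have hinj : Function.Injective Φ := by
    rintro ⟨g, f, g', f'⟩ ⟨G, F, G', F'⟩ h
    simp only [hΦ, Subtype.mk.injEq] at h
    have hco : ∀ w, expOf n n₁ n₂ (pmat n₁ g f)
        (qmat n₂ g' f' (k - ((∑ x, (g x : ℕ)) + (∑ x, (f x : ℕ)) + (∑ x, (g' x : ℕ)) +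
          (∑ x, (f' x : ℕ))))) w =
        expOf n n₁ n₂ (pmat n₁ G F)
        (qmat n₂ G' F' (k - ((∑ x, (G x : ℕ)) + (∑ x, (F x : ℕ)) + (∑ x, (G' x : ℕ)) +
          (∑ x, (F' x : ℕ))))) w := fun w => by rw [h]
    have hf : f = F := by
      funext x
      have hx := hco (Sum.inl x.1)
      rw [expOf_apply_inl, expOf_apply_inl, if_neg (by omega : ¬ (x.1.val < n₁)),
        if_neg (by omega : ¬ (x.1.val < n₁)), if_pos x.2.1, if_pos x.2.1,
        col_p g f hn h1 h2 h3 x.1 x.2.1 x.2.2, col_p G F hn h1 h2 h3 x.1 x.2.1 x.2.2] at hx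
      have : (f x : ℕ) = (F x : ℕ) := by simpa [ext₁, x.2.1, x.2.2] using hx
      exact Fin.val_injective this
    have hf' : f' = F' := by
      funext x
      have hx := hco (Sum.inr x.1)
      rw [expOf_apply_inr, expOf_apply_inr, if_neg (by omega : ¬ (x.1.val < n₂)),
        if_neg (by omega : ¬ (x.1.val < n₂)), if_pos x.2.1, if_pos x.2.1,
        col_q g' f' _ hn h1 h2 h3 x.1 x.2.1 x.2.2,
        col_q G' F' _ hn h1 h2 h3 x.1 x.2.1 x.2.2] at hx
      have : (f' x : ℕ) = (F' x : ℕ) := by simpa [ext₁, x.2.1, x.2.2] using hx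
      exact Fin.val_injective this
    have hg' : g' = G' := by
      funext x
      have hx := hco (Sum.inr x.1)
      rw [expOf_apply_inr, expOf_apply_inr, if_pos x.2.2, if_pos x.2.2,
        if_neg (by omega : ¬ (n₂ ≤ x.1.val)), if_neg (by omega : ¬ (n₂ ≤ x.1.val)),
        add_zero, add_zero,
        row_q g' f' _ hn h1 h2 h3 x.1 x.2.2, row_q G' F' _ hn h1 h2 h3 x.1 x.2.2,
        if_neg (by omega : ¬ (x.1.val = 0)), if_neg (by omega : ¬ (x.1.val = 0)),
        zero_add, zero_add] at hx
      have : (g' x : ℕ) = (G' x : ℕ) := by simpa [ext₁, x.2.1, x.2.2] using hx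
      exact Fin.val_injective this
    have hg : g = G := by
      funext x
      have hx := hco (Sum.inl x.1)
      rw [expOf_apply_inl, expOf_apply_inl, if_pos x.2, if_pos x.2,
        if_neg (by omega : ¬ (n₁ ≤ x.1.val)), if_neg (by omega : ¬ (n₁ ≤ x.1.val)),
        add_zero, add_zero, row_p g f hn h1 h2 h3 x.1 x.2, row_p G F hn h1 h2 h3 x.1 x.2,
        hf] at hx
      have : (g x : ℕ) = (G x : ℕ) := by
        have h2' : ext₁ (fun i : Fin n => i.val < n₁) g x.1 =
            ext₁ (fun i : Fin n => i.val < n₁) G x.1 := by omega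
        simpa [ext₁, x.2] using h2'
      exact Fin.val_injective this
    simp [hg, hf, hg', hf']
  have hle := Nat.card_le_card_of_injective Φ hinj
  refine le_trans (le_of_eq ?_) hle
  rw [Nat.card_eq_fintype_card, Fintype.card_prod, Fintype.card_prod, Fintype.card_prod,
    Fintype.card_fun, Fintype.card_fun, Fintype.card_fun, Fintype.card_fun, Fintype.card_fin,
    cardLt n₁ (by omega), cardIco n₁ (n - 1) (by omega), cardIco 1 n₂ (by omega),
    cardIco n₂ (n - 1) (by omega), ← pow_add, ← pow_add, ← pow_add]
  congr 1
  omega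

end Stmt7Aux


theorem stmt_7 (n n₁ n₂ : ℕ) (hn : 2 ≤ n) (h1 : 1 ≤ n₁) (h2 : n₁ ≤ n₂) (h3 : n₂ ≤ n - 1) :
    ∃ c₁ c₂ : ℝ, 0 < c₁ ∧ 0 < c₂ ∧ ∃ K : ℕ, ∀ k ≥ K,
      c₁ * (k : ℝ) ^ (2 * n - 3) ≤
        (Module.finrank ℝ (Submodule.span ℝ (Qset n n₁ n₂ k)) : ℝ) ∧
      (Module.finrank ℝ (Submodule.span ℝ (Qset n n₁ n₂ k)) : ℝ) ≤
        c₂ * (k : ℝ) ^ (2 * n - 3) := by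
  have hnR : (0:ℝ) < (n:ℝ) := by exact_mod_cast (by omega : 0 < n)
  have h4n : (0:ℝ) < 4*(n:ℝ) := by linarith
  refine ⟨(1/(4*(n:ℝ)))^(2*n-3), 2^(2*n-3), pow_pos (one_div_pos.mpr h4n) _,
    pow_pos (by norm_num) _, 4*n, fun k hk => ?_⟩
  have hrk := finrank_eq (n := n) (n₁ := n₁) (n₂ := n₂) k
  have hup := card_upper hn h1 h2 h3 k
  set m := k / (2*n) with hm
  have hmk : 2*n*m ≤ k := by
    rw [hm, mul_comm]
    exact Nat.div_mul_le_self k (2*n)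
  have hlow := card_lower hn h1 h2 h3 k m hmk
  have hdm := Nat.div_add_mod k (2*n)
  rw [← hm] at hdm
  have hr : k % (2*n) < 2*n := Nat.mod_lt _ (by omega)
  have hm1 : 1 ≤ m := by rw [hm]; exact (Nat.one_le_div_iff (by omega)).mpr (by omega)
  have h2n : 2*n ≤ 2*n*m := Nat.le_mul_of_pos_right _ (by omega)
  have h4 : k ≤ 2*(2*n*m) := by omega
  -- real versions
  have hfr_low : (m:ℝ)^(2*n-3) ≤ (Module.finrank ℝ (Submodule.span ℝ (Qset n n₁ n₂ k)) : ℝ) := by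
    rw [hrk]
    exact_mod_cast Nat.cast_le.mpr hlow
  have hfr_up : (Module.finrank ℝ (Submodule.span ℝ (Qset n n₁ n₂ k)) : ℝ) ≤
      ((k:ℝ)+1)^(2*n-3) := by
    rw [hrk]
    exact_mod_cast Nat.cast_le.mpr hup
  constructor
  · refine le_trans ?_ hfr_low
    rw [← mul_pow]
    refine pow_le_pow_left₀ (by positivity) ?_ _
    rw [div_mul_eq_mul_div, one_mul, div_le_iff₀ h4n]
    have : (k:ℝ) ≤ 2*(2*n*m) := by exact_mod_cast h4
    push_cast at this ⊢
    nlinarith [hnR]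
  · refine le_trans hfr_up ?_
    rw [← mul_pow]
    refine pow_le_pow_left₀ (by positivity) ?_ _
    have hk1 : (1:ℝ) ≤ (k:ℝ) := by exact_mod_cast (by omega : 1 ≤ k)
    linarith
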